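/- Suppose every convex combination of weak-star slices of B_{X*} has diameter 2. Then for any finite δ-net y₁,…,y_n of S_Y (Y a finite-dimensional subspace of X) and any 0 < ρ < δ, there exists x ∈ S_X and functionals f_i, g_i ∈ S(B_{X*}, y_i, ρ) with f_i(x) > 1 − ρ and g_i(x) < −(1 − ρ) for all i, and consequently ‖t y_i + αx‖ ≥ (1 − ρ)(t‖y_i‖ + |α|) for all t ≥ 0, α ∈ ℝ and all i. -/

import Mathlib

open scoped BigOperators
open Metric

noncomputable section

/-- The weak-star slice of the dual unit ball determined by `y` and `ρ`. -/
def wSlice {X : Type*} [NormedAddCommGroup X] [NormedSpace ℝ X] (y : X) (ρ : ℝ) :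
    Set (StrongDual ℝ X) :=
  {f | ‖f‖ ≤ 1 ∧ 1 - ρ < f y}

/-- The convex combination `∑ lam i • S i` of sets. -/
def ccomb {E : Type*} [AddCommMonoid E] [Module ℝ E] {n : ℕ}
    (lam : Fin n → ℝ) (S : Fin n → Set E) : Set E :=
  {y | ∃ f : Fin n → E, (∀ i, f i ∈ S i) ∧ y = ∑ i, lam i • f i}

set_option maxHeartbeats 1600000

theorem ccomb_wSlices_diam_two_gives_octahedral_direction
    (X : Type*) [NormedAddCommGroup X] [NormedSpace ℝ X] [CompleteSpace X]
    (h : ∀ (n : ℕ) (lam : Fin n → ℝ), (∀ i, 0 < lam i) → ∑ i, lam i = 1 →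
      ∀ (x : Fin n → X), (∀ i, ‖x i‖ = 1) →
      ∀ (α : Fin n → ℝ), (∀ i, α i ∈ Set.Ioo (0 : ℝ) 1) →
      Metric.diam (ccomb lam (fun i => wSlice (x i) (α i))) = 2)
    (Y : Subspace ℝ X) (hY : FiniteDimensional ℝ Y)
    (δ : ℝ) (hδ : δ ∈ Set.Ioo (0:ℝ) 1)
    (n : ℕ) (hn : 0 < n) (y : Fin n → X)
    (hyY : ∀ i, y i ∈ Y) (hy : ∀ i, ‖y i‖ = 1)
    (hnet : ∀ z ∈ Y, ‖z‖ = 1 → ∃ i, ‖z - y i‖ ≤ δ)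
    (ρ : ℝ) (hρ : ρ ∈ Set.Ioo (0:ℝ) δ) :
    ∃ x : X, ‖x‖ = 1 ∧
      ∃ f g : Fin n → StrongDual ℝ X,
        (∀ i, f i ∈ wSlice (y i) ρ) ∧ (∀ i, g i ∈ wSlice (y i) ρ) ∧
        (∀ i, 1 - ρ < f i x) ∧ (∀ i, g i x < -(1 - ρ)) ∧
        (∀ i, ∀ t : ℝ, 0 ≤ t → ∀ a : ℝ,
          (1 - ρ) * (t * ‖y i‖ + |a|) ≤ ‖t • y i + a • x‖) := by
  obtain ⟨hδ0, hδ1⟩ := hδ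
  obtain ⟨hρ0, hρδ⟩ := hρ
  have hρ1 : ρ < 1 := hρδ.trans hδ1
  have hn' : (0:ℝ) < n := by exact_mod_cast hn
  set lam : Fin n → ℝ := fun _ => (n : ℝ)⁻¹ with hlamdef
  have hlam : ∀ i, 0 < lam i := fun i => by positivity
  have hlamsum : ∑ i, lam i = 1 := by
    simp [hlamdef, Finset.sum_const, Finset.card_univ]
    field_simp
  have hdiam := h n lam hlam hlamsum y hy (fun _ => ρ) (fun _ => ⟨hρ0, hρ1⟩)
  set C := ccomb lam (fun i => wSlice (y i) ρ) with hC
  have hε : (0:ℝ) < ρ / (2 * n) := by positivity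
  -- extract u, v in C at distance > 2 - ρ/(2n)
  have hex : ∃ u ∈ C, ∃ v ∈ C, 2 - ρ / (2 * n) < dist u v := by
    by_contra hcon
    push_neg at hcon
    have hle : Metric.diam C ≤ 2 - ρ / (2 * n) := by
      apply Metric.diam_le_of_forall_dist_le
      · have h1 : ρ / (2 * (n:ℝ)) ≤ ρ := by
          apply div_le_self hρ0.le
          have : (1:ℝ) ≤ n := by exact_mod_cast hn
          linarith
        linarith
      · exact fun u hu v hv => hcon u hu v hv
    rw [hdiam] at hle
    nlinarith
  obtain ⟨u, hu, v, hv, huv⟩ := hex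
  obtain ⟨F, hF, hFu⟩ := hu
  obtain ⟨G, hG, hGv⟩ := hv
  -- the difference functional
  have hnormuv : 2 - ρ / (2 * n) < ‖u - v‖ := by
    rwa [dist_eq_norm] at huv
  -- find x' with (u - v) x' > 2 - ρ/n
  have hr : 2 - ρ / n ≥ 0 := by
    have : ρ / n ≤ 1 := by
      rw [div_le_one hn']
      have : (1:ℝ) ≤ n := by exact_mod_cast hn
      linarith
    linarith
  have hstep : (2 : ℝ) - ρ / n < 2 - ρ / (2 * n) - ρ / (2 * n) + ρ / (2*n) := by
    have : ρ / n = ρ / (2 * n) + ρ / (2 * n) := by field_simp; ring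
    linarith
  obtain ⟨x', hx'norm, hx'⟩ := (u - v).exists_lt_apply_of_lt_opNorm
    (show 2 - ρ / (2*n) - ρ / (2*n) < ‖u - v‖ by linarith [hε]) 
  -- ‖(u-v) x'‖ = |(u-v) x'| ; choose sign
  have habs : 2 - ρ / n < |(u - v) x'| := by
    rw [Real.norm_eq_abs] at hx'
    have : ρ / n = ρ / (2 * n) + ρ / (2 * n) := by field_simp; ring
    linarith
  -- choose w = ±x' with (u-v) w > 2 - ρ/n and ‖w‖ < 1
  obtain ⟨w, hwnorm, hw⟩ : ∃ w : X, ‖w‖ < 1 ∧ 2 - ρ / n < (u - v) w := by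
    rcases abs_cases ((u - v) x') with ⟨he, _⟩ | ⟨he, _⟩
    · exact ⟨x', hx'norm, by rwa [he] at habs⟩
    · refine ⟨-x', by rwa [norm_neg], ?_⟩
      rw [map_neg]
      rw [he] at habs
      linarith
  have hwpos : (0:ℝ) < (u - v) w := lt_of_le_of_lt hr hw
  have hwne : w ≠ 0 := by
    rintro rfl
    simp at hwpos
  have hwn0 : (0:ℝ) < ‖w‖ := norm_pos_iff.mpr hwne
  -- normalize
  set x : X := ‖w‖⁻¹ • w with hxdef
  have hxnorm : ‖x‖ = 1 := by
    rw [hxdef, norm_smul, norm_inv, norm_norm, inv_mul_cancel₀ (ne_of_gt hwn0)]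
  have hxval : 2 - ρ / n < (u - v) x := by
    have h1 : (u - v) x = ‖w‖⁻¹ * (u - v) w := by
      rw [hxdef, map_smul, smul_eq_mul]
    have h2 : (1:ℝ) ≤ ‖w‖⁻¹ := by
      rw [le_inv_comm₀ one_pos hwn0]
      · simpa using hwnorm.le
    have h3 : (u - v) w ≤ ‖w‖⁻¹ * (u - v) w := le_mul_of_one_le_left hwpos.le h2
    rw [h1]; linarith
  -- per-coordinate bounds
  have key : ∀ i, 2 - ρ < F i x - G i x := by
    intro i
    have hsum : (u - v) x = ∑ j, lam j * (F j x - G j x) := by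
      rw [hFu, hGv]
      have : (∑ j, lam j • F j) - (∑ j, lam j • G j) = ∑ j, (lam j • F j - lam j • G j) := by
        rw [Finset.sum_sub_distrib]
      rw [this]
      rw [ContinuousLinearMap.sum_apply]
      congr 1
      ext j
      simp [mul_sub]
    -- bound each term by 2/n, and all terms ≥ ... 
    have hterm_le : ∀ j, lam j * (F j x - G j x) ≤ lam j * 2 := by
      intro j
      have hF1 : F j x ≤ 1 := by
        calc F j x ≤ |F j x| := le_abs_self _
        _ ≤ ‖F j‖ * ‖x‖ := (F j).le_opNorm x
        _ ≤ 1 := by rw [hxnorm]; simpa using (hF j).1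
      have hG1 : -1 ≤ G j x := by
        have : |G j x| ≤ 1 := by
          calc |G j x| ≤ ‖G j‖ * ‖x‖ := (G j).le_opNorm x
          _ ≤ 1 := by rw [hxnorm]; simpa using (hG j).1
        linarith [neg_abs_le (G j x)]
      exact mul_le_mul_of_nonneg_left (by linarith : F j x - G j x ≤ 2) (hlam j).le
    have hsplit : ∑ j, lam j * (F j x - G j x)
        = lam i * (F i x - G i x) + ∑ j ∈ Finset.univ.erase i, lam j * (F j x - G j x) := by
      exact (Finset.add_sum_erase Finset.univ (fun j => lam j * (F j x - G j x))
        (Finset.mem_univ i)).symm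
    have herase_le : ∑ j ∈ Finset.univ.erase i, lam j * (F j x - G j x)
        ≤ ∑ j ∈ Finset.univ.erase i, lam j * 2 :=
      Finset.sum_le_sum fun j _ => hterm_le j
    have herase_val : ∑ j ∈ Finset.univ.erase i, lam j * 2 = ((n : ℝ) - 1) * ((n:ℝ)⁻¹ * 2) := by
      simp only [hlamdef]
      rw [Finset.sum_const, Finset.card_erase_of_mem (Finset.mem_univ i),
        Finset.card_univ, Fintype.card_fin, nsmul_eq_mul]
      have h1 : (1:ℕ) ≤ n := hn
      push_cast [Nat.cast_sub h1]
      ring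
    have hxval2 : 2 - ρ / n < ∑ j, lam j * (F j x - G j x) := by
      rw [← hsum]; exact hxval
    have hlow : 2 - ρ / n - ((n:ℝ) - 1) * ((n:ℝ)⁻¹ * 2) < lam i * (F i x - G i x) := by
      rw [hsplit] at hxval2
      linarith [herase_le.trans_eq herase_val]
    have hval : 2 - ρ / n - ((n:ℝ) - 1) * ((n:ℝ)⁻¹ * 2) = (n:ℝ)⁻¹ * (2 - ρ) := by
      field_simp
      ring
    rw [hval, hlamdef] at hlow
    have := (mul_lt_mul_iff_right₀ (by positivity : (0:ℝ) < (n:ℝ)⁻¹)).mp hlow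
    linarith
  -- conclude
  refine ⟨x, hxnorm, F, G, hF, hG, ?_, ?_, ?_⟩
  · intro i
    have hG1 : -1 ≤ G i x := by
      have : |G i x| ≤ 1 := by
        calc |G i x| ≤ ‖G i‖ * ‖x‖ := (G i).le_opNorm x
        _ ≤ 1 := by rw [hxnorm]; simpa using (hG i).1
      linarith [neg_abs_le (G i x)]
    linarith [key i]
  · intro i
    have hF1 : F i x ≤ 1 := by
      calc F i x ≤ |F i x| := le_abs_self _
      _ ≤ ‖F i‖ * ‖x‖ := (F i).le_opNorm x
      _ ≤ 1 := by rw [hxnorm]; simpa using (hF i).1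
    linarith [key i]
  · intro i t ht a
    have hFi : 1 - ρ < F i x := by
      have hG1 : -1 ≤ G i x := by
        have : |G i x| ≤ 1 := by
          calc |G i x| ≤ ‖G i‖ * ‖x‖ := (G i).le_opNorm x
          _ ≤ 1 := by rw [hxnorm]; simpa using (hG i).1
        linarith [neg_abs_le (G i x)]
      linarith [key i]
    have hGi : G i x < -(1 - ρ) := by
      have hF1 : F i x ≤ 1 := by
        calc F i x ≤ |F i x| := le_abs_self _
        _ ≤ ‖F i‖ * ‖x‖ := (F i).le_opNorm x
        _ ≤ 1 := by rw [hxnorm]; simpa using (hF i).1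
      linarith [key i]
    have hyi : ‖y i‖ = 1 := hy i
    rw [hyi, mul_one]
    rcases le_or_gt 0 a with ha | ha
    · -- use F i
      have happ : F i (t • y i + a • x) = t * F i (y i) + a * F i x := by
        simp [map_add, map_smul, smul_eq_mul]
      have hbnd : F i (t • y i + a • x) ≤ ‖t • y i + a • x‖ := by
        calc F i (t • y i + a • x) ≤ |F i (t • y i + a • x)| := le_abs_self _
        _ ≤ ‖F i‖ * ‖t • y i + a • x‖ := (F i).le_opNorm _
        _ ≤ 1 * ‖t • y i + a • x‖ := by
            apply mul_le_mul_of_nonneg_right (hF i).1 (norm_nonneg _)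
        _ = ‖t • y i + a • x‖ := one_mul _
      have h1 : (1 - ρ) * t ≤ t * F i (y i) := by
        have := (hF i).2
        nlinarith
      have h2 : (1 - ρ) * a ≤ a * F i x := by nlinarith
      rw [abs_of_nonneg ha]
      nlinarith
    · -- use G i
      have happ : G i (t • y i + a • x) = t * G i (y i) + a * G i x := by
        simp [map_add, map_smul, smul_eq_mul]
      have hbnd : G i (t • y i + a • x) ≤ ‖t • y i + a • x‖ := by
        calc G i (t • y i + a • x) ≤ |G i (t • y i + a • x)| := le_abs_self _
        _ ≤ ‖G i‖ * ‖t • y i + a • x‖ := (G i).le_opNorm _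
        _ ≤ 1 * ‖t • y i + a • x‖ := by
            apply mul_le_mul_of_nonneg_right (hG i).1 (norm_nonneg _)
        _ = ‖t • y i + a • x‖ := one_mul _
      have h1 : (1 - ρ) * t ≤ t * G i (y i) := by
        have := (hG i).2
        nlinarith
      have h2 : (1 - ρ) * (-a) ≤ a * G i x := by nlinarith
      rw [abs_of_neg ha]
      nlinarith
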